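/- The greedy spanner algorithm, which starts from a spanning tree T of G and considers the remaining edges in non-decreasing order of weight, adding an edge e whenever (1+ε)·w(e) is strictly less than the current distance between its endpoints in the partially built subgraph, produces a (1+ε)-spanner of G. -/

import Mathlib

open scoped Classical
noncomputable section

/-- Weighted length of a walk: sum of edge weights with multiplicity. -/
def wlen {V : Type*} (w : Sym2 V → ℝ) {G : SimpleGraph V} {u v : V}
    (p : G.Walk u v) : ℝ :=
  (p.edges.map w).sum

/-- Weighted shortest-path distance: infimum of weighted lengths of walks. -/
def wdist {V : Type*} (G : SimpleGraph V) (w : Sym2 V → ℝ) (u v : V) : ℝ :=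
  sInf {x : ℝ | ∃ p : G.Walk u v, wlen w p = x}

/-- `T` is a spanning tree of `G`. -/
def IsSpanningTree {V : Type*} (G T : SimpleGraph V) : Prop :=
  T ≤ G ∧ T.IsTree

/-- One step of the greedy spanner algorithm: add the edge `{p.1, p.2}` iff
`(1+ε)·w(e)` is strictly less than the current distance between its endpoints. -/
def greedyStep {V : Type*} (ε : ℝ) (w : Sym2 V → ℝ)
    (G' : SimpleGraph V) (p : V × V) : SimpleGraph V :=
  if (1 + ε) * w s(p.1, p.2) < wdist G' w p.1 p.2 then
    G' ⊔ SimpleGraph.fromEdgeSet {s(p.1, p.2)}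
  else G'

/-- The greedy spanner algorithm: start from `T` and process the listed edges in
order, adding each edge iff it is not yet `(1+ε)`-approximated. -/
def greedy {V : Type*} (ε : ℝ) (w : Sym2 V → ℝ)
    (T : SimpleGraph V) (l : List (V × V)) : SimpleGraph V :=
  l.foldl (greedyStep ε w) T

/-- `l` lists exactly the edges of `G` not in `T` (each once, in some orientation),
in non-decreasing order of weight. -/
def IsGreedyInput {V : Type*} (G T : SimpleGraph V) (w : Sym2 V → ℝ)
    (l : List (V × V)) : Prop :=
  (l.map fun p => w s(p.1, p.2)).Pairwise (· ≤ ·) ∧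
  (l.map fun p => s(p.1, p.2)).Nodup ∧
  (∀ p ∈ l, G.Adj p.1 p.2 ∧ ¬ T.Adj p.1 p.2) ∧
  (∀ u v : V, G.Adj u v → ¬ T.Adj u v → s(u, v) ∈ l.map fun p => s(p.1, p.2))

section Aux

variable {V : Type*} {G G₁ G₂ : SimpleGraph V} {w : Sym2 V → ℝ} {u v a b c : V}

lemma wlen_nonneg (hw : ∀ e, 0 ≤ w e) (p : G.Walk u v) : 0 ≤ wlen w p := by
  apply List.sum_nonneg; intro x hx
  simp only [List.mem_map] at hx
  obtain ⟨e, -, rfl⟩ := hx; exact hw e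

lemma wdist_bdd (hw : ∀ e, 0 ≤ w e) :
    BddBelow {x : ℝ | ∃ p : G.Walk u v, wlen w p = x} :=
  ⟨0, fun _ ⟨p, hp⟩ => hp ▸ wlen_nonneg hw p⟩

lemma wdist_le_wlen (hw : ∀ e, 0 ≤ w e) (p : G.Walk u v) :
    wdist G w u v ≤ wlen w p :=
  csInf_le (wdist_bdd hw) ⟨p, rfl⟩

lemma wdist_set_nonempty (h : G.Reachable u v) :
    Set.Nonempty {x : ℝ | ∃ p : G.Walk u v, wlen w p = x} := by
  obtain ⟨p⟩ := h
  exact ⟨wlen w p, p, rfl⟩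

lemma wdist_anti (hw : ∀ e, 0 ≤ w e) (h : G₁ ≤ G₂) (hr : G₁.Reachable u v) :
    wdist G₂ w u v ≤ wdist G₁ w u v := by
  apply csInf_le_csInf (wdist_bdd hw) (wdist_set_nonempty hr)
  rintro x ⟨p, rfl⟩
  refine ⟨p.transfer G₂ (fun e he => ?_), ?_⟩
  · exact (SimpleGraph.edgeSet_mono h) (p.edges_subset_edgeSet he)
  · simp [wlen]

lemma wdist_le_of_adj (hw : ∀ e, 0 ≤ w e) (h : G.Adj u v) :
    wdist G w u v ≤ w s(u, v) := by
  have := wdist_le_wlen (G := G) hw (SimpleGraph.Walk.cons h SimpleGraph.Walk.nil)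
  simpa [wlen] using this

lemma wdist_triangle (hw : ∀ e, 0 ≤ w e) (hab : G.Reachable a b)
    (hbc : G.Reachable b c) :
    wdist G w a c ≤ wdist G w a b + wdist G w b c := by
  have key : ∀ x ∈ {x : ℝ | ∃ p : G.Walk a b, wlen w p = x},
      ∀ y ∈ {x : ℝ | ∃ p : G.Walk b c, wlen w p = x},
      wdist G w a c ≤ x + y := by
    rintro x ⟨p, rfl⟩ y ⟨q, rfl⟩
    have := wdist_le_wlen (G := G) hw (p.append q)
    simpa [wlen] using this
  have h1 : ∀ x ∈ {x : ℝ | ∃ p : G.Walk a b, wlen w p = x},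
      wdist G w a c - x ≤ wdist G w b c := by
    intro x hx
    apply le_csInf (wdist_set_nonempty hbc)
    intro y hy
    linarith [key x hx y hy]
  have h2 : wdist G w a c - wdist G w b c ≤ wdist G w a b := by
    apply le_csInf (wdist_set_nonempty hab)
    intro x hx
    linarith [h1 x hx]
  linarith

lemma wdist_comm : wdist G w u v = wdist G w v u := by
  unfold wdist
  congr 1
  ext x
  constructor <;> rintro ⟨p, rfl⟩ <;>
    exact ⟨p.reverse, by simp [wlen, List.sum_reverse]⟩

variable {ε : ℝ} {T G₀ : SimpleGraph V}

lemma le_greedyStep (ε : ℝ) (w : Sym2 V → ℝ) (G' : SimpleGraph V) (p : V × V) :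
    G' ≤ greedyStep ε w G' p := by
  unfold greedyStep; split
  · exact le_sup_left
  · exact le_rfl

lemma le_foldl_greedy (l : List (V × V)) (G₀ : SimpleGraph V) :
    G₀ ≤ l.foldl (greedyStep ε w) G₀ := by
  induction l generalizing G₀ with
  | nil => exact le_rfl
  | cons q rest ih =>
      exact le_trans (le_greedyStep ε w G₀ q) (ih _)

lemma fromEdgeSet_single_le (h : G.Adj a b) :
    SimpleGraph.fromEdgeSet {s(a, b)} ≤ G := by
  intro x y hxy
  rw [SimpleGraph.fromEdgeSet_adj] at hxy
  obtain ⟨he, -⟩ := hxy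
  simp only [Set.mem_singleton_iff, Sym2.eq_iff] at he
  rcases he with ⟨rfl, rfl⟩ | ⟨rfl, rfl⟩
  · exact h
  · exact h.symm

lemma foldl_greedy_le (l : List (V × V)) (G₀ : SimpleGraph V)
    (hG₀ : G₀ ≤ G) (hl : ∀ p ∈ l, G.Adj p.1 p.2) :
    l.foldl (greedyStep ε w) G₀ ≤ G := by
  induction l generalizing G₀ with
  | nil => exact hG₀
  | cons q rest ih =>
      refine ih _ ?_ (fun p hp => hl p (List.mem_cons_of_mem _ hp))
      unfold greedyStep; split
      · exact sup_le hG₀ (fromEdgeSet_single_le (hl q List.mem_cons_self))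
      · exact hG₀

lemma greedy_edge_bound (hw : ∀ e, 0 ≤ w e) (hε : 0 < ε) (hTc : T.Connected)
    (l : List (V × V)) (G₀ : SimpleGraph V) (hT : T ≤ G₀)
    (hne : ∀ p ∈ l, p.1 ≠ p.2) :
    ∀ p ∈ l, wdist (l.foldl (greedyStep ε w) G₀) w p.1 p.2
      ≤ (1 + ε) * w s(p.1, p.2) := by
  induction l generalizing G₀ with
  | nil => intro p hp; simp at hp
  | cons q rest ih =>
      intro p hp
      have hstep : List.foldl (greedyStep ε w) G₀ (q :: rest)
          = List.foldl (greedyStep ε w) (greedyStep ε w G₀ q) rest := rfl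
      set G₁ := greedyStep ε w G₀ q with hG₁
      have hTG₁ : T ≤ G₁ := le_trans hT (le_greedyStep ε w G₀ q)
      have hGf : G₁ ≤ List.foldl (greedyStep ε w) G₁ rest := le_foldl_greedy rest G₁
      rcases List.mem_cons.mp hp with rfl | hp'
      · by_cases hcond : (1 + ε) * w s(p.1, p.2) < wdist G₀ w p.1 p.2
        · have hadj : G₁.Adj p.1 p.2 := by
            rw [hG₁]; unfold greedyStep; rw [if_pos hcond]
            exact Or.inr (by
              rw [SimpleGraph.fromEdgeSet_adj]
              exact ⟨rfl, hne p List.mem_cons_self⟩)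
          have hadj' : (List.foldl (greedyStep ε w) G₁ rest).Adj p.1 p.2 := hGf hadj
          rw [hstep]
          calc wdist (List.foldl (greedyStep ε w) G₁ rest) w p.1 p.2
              ≤ w s(p.1, p.2) := wdist_le_of_adj hw hadj'
            _ ≤ (1 + ε) * w s(p.1, p.2) := by nlinarith [hw s(p.1, p.2)]
        · push_neg at hcond
          have hG₁eq : G₁ = G₀ := by
            rw [hG₁]; unfold greedyStep; rw [if_neg (not_lt.mpr hcond)]
          have hreach : G₀.Reachable p.1 p.2 :=
            (hTc.preconnected p.1 p.2).mono hT
          rw [hstep]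
          calc wdist (List.foldl (greedyStep ε w) G₁ rest) w p.1 p.2
              ≤ wdist G₀ w p.1 p.2 :=
                wdist_anti hw (hG₁eq ▸ hGf) hreach
            _ ≤ (1 + ε) * w s(p.1, p.2) := hcond
      · rw [hstep]
        exact ih G₁ hTG₁ (fun r hr => hne r (List.mem_cons_of_mem _ hr)) p hp'

end Aux

/-- the greedy spanner algorithm produces a `(1+ε)`-spanner of `G`. -/
theorem stmt2 {V : Type*} [Fintype V]
    (G T : SimpleGraph V) (w : Sym2 V → ℝ) (ε : ℝ) (l : List (V × V))
    (hconn : G.Connected) (hT : IsSpanningTree G T)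
    (hw : ∀ e, 0 ≤ w e) (hε : 0 < ε)
    (hl : IsGreedyInput G T w l) :
    greedy ε w T l ≤ G ∧
      ∀ u v : V, wdist (greedy ε w T l) w u v ≤ (1 + ε) * wdist G w u v := by
  obtain ⟨hTG, hTtree⟩ := hT
  obtain ⟨-, -, hladj, hlcov⟩ := hl
  have hTc : T.Connected := hTtree.isConnected
  set P := greedy ε w T l with hP
  have hPle : P ≤ G :=
    foldl_greedy_le l T hTG (fun p hp => (hladj p hp).1)
  have hTP : T ≤ P := le_foldl_greedy l T
  have hreachP : ∀ u v : V, P.Reachable u v :=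
    fun u v => (hTc.preconnected u v).mono hTP
  have h1ε : (0 : ℝ) < 1 + ε := by linarith
  -- every edge of G is (1+ε)-approximated in P
  have hedge : ∀ a b : V, G.Adj a b → wdist P w a b ≤ (1 + ε) * w s(a, b) := by
    intro a b hab
    by_cases hTab : T.Adj a b
    · calc wdist P w a b ≤ w s(a, b) := wdist_le_of_adj hw (hTP hTab)
        _ ≤ (1 + ε) * w s(a, b) := by nlinarith [hw s(a, b)]
    · have hmem := hlcov a b hab hTab
      simp only [List.mem_map] at hmem
      obtain ⟨p, hp, hpe⟩ := hmem
      have hbound := greedy_edge_bound hw hε hTc l T le_rfl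
        (fun q hq => (hladj q hq).1.ne) p hp
      rw [Sym2.eq_iff] at hpe
      rcases hpe with ⟨h1, h2⟩ | ⟨h1, h2⟩
      · rw [h1, h2] at hbound; exact hbound
      · rw [h1, h2] at hbound
        rw [wdist_comm]
        calc wdist P w b a ≤ (1 + ε) * w s(b, a) := hbound
          _ = (1 + ε) * w s(a, b) := by rw [Sym2.eq_swap]
  -- per-walk bound
  have hwalk : ∀ (u v : V) (p : G.Walk u v), wdist P w u v ≤ (1 + ε) * wlen w p := by
    intro u v p
    induction p with
    | @nil x =>
        have h0 := wdist_le_wlen (G := P) hw (SimpleGraph.Walk.nil (u := x))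
        simp only [wlen, SimpleGraph.Walk.edges_nil, List.map_nil, List.sum_nil] at h0 ⊢
        simpa using h0
    | @cons x y z h q ih =>
        have htri : wdist P w x z ≤ wdist P w x y + wdist P w y z :=
          wdist_triangle hw (hreachP x y) (hreachP y z)
        have he : wdist P w x y ≤ (1 + ε) * w s(x, y) := hedge x y h
        have hq : wlen w (SimpleGraph.Walk.cons h q) = w s(x, y) + wlen w q := by
          simp [wlen]
        rw [hq]
        calc wdist P w x z ≤ wdist P w x y + wdist P w y z := htri
          _ ≤ (1 + ε) * w s(x, y) + (1 + ε) * wlen w q := add_le_add he ih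
          _ = (1 + ε) * (w s(x, y) + wlen w q) := by ring
  refine ⟨hPle, fun u v => ?_⟩
  have hdiv : wdist P w u v / (1 + ε) ≤ wdist G w u v := by
    apply le_csInf (wdist_set_nonempty (hconn.preconnected u v))
    rintro x ⟨p, rfl⟩
    rw [div_le_iff₀ h1ε]
    calc wdist P w u v ≤ (1 + ε) * wlen w p := hwalk u v p
      _ = wlen w p * (1 + ε) := by ring
  calc wdist P w u v = wdist P w u v / (1 + ε) * (1 + ε) := by
        field_simp
    _ ≤ wdist G w u v * (1 + ε) := by
        apply mul_le_mul_of_nonneg_right hdiv (le_of_lt h1ε)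
    _ = (1 + ε) * wdist G w u v := by ring
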